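/- Let f = (f_1, …, f_s) be symmetric polynomials in ℚ[x_1, …, x_n] and let λ = (n_1^{t_1} … n_k^{t_k}) be a partition of n with length ℓ = t_1 + ⋯ + t_k. Then T_λ(Jac_{x_1,…,x_n}(f)) = Jac_{z_{1,1},…,z_{t_k,k}}(T_λ(f)) · Z, where T_λ is applied entrywise to the s×n Jacobian matrix of f, Jac(T_λ(f)) is the s×ℓ Jacobian matrix of T_λ(f) with respect to the variables z_{j,i}, and Z ∈ ℚ^{ℓ×n} is the matrix whose entry in row (j,i) and column m equals 1/n_i if m ∈ I_{j,i} and 0 otherwise. -/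

import Mathlib

open MvPolynomial

/-- `σ_{j,i} = Σ_{r<i} t_r n_r + j · n_i` (with `j` zero-based). -/
def sigmaShift {k : ℕ} (nn t : Fin k → ℕ) (i : Fin k) (j : ℕ) : ℕ :=
  (∑ r ∈ Finset.Iio i, t r * nn r) + j * nn i

/-- The index set `I_{j,i}` (as zero-based indices of `Fin n`). -/
def Iset (n : ℕ) {k : ℕ} (nn t : Fin k → ℕ) (i : Fin k) (j : ℕ) : Finset (Fin n) :=
  Finset.univ.filter fun m =>
    sigmaShift nn t i j ≤ (m : ℕ) ∧ (m : ℕ) < sigmaShift nn t i j + nn i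

lemma chainRule {n : ℕ} {τ : Type} [DecidableEq τ] (g : Fin n → MvPolynomial τ ℚ)
    (p : MvPolynomial (Fin n) ℚ) (v : τ) :
    pderiv v (aeval g p) = ∑ m, aeval g (pderiv m p) * pderiv v (g m) := by
  induction p using MvPolynomial.induction_on with
  | C a => simp only [aeval_C, algebraMap_eq, pderiv_C, map_zero, zero_mul, Finset.sum_const_zero]
  | add p q hp hq => simp only [map_add, hp, hq, add_mul, Finset.sum_add_distrib]
  | mul_X p j hp =>
    simp only [map_mul, aeval_X, pderiv_mul, hp, pderiv_X, map_add, add_mul,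
      Finset.sum_add_distrib, Finset.sum_mul, Pi.single_apply, apply_ite (aeval g),
      map_one, map_zero, mul_ite, mul_one, mul_zero, ite_mul, zero_mul,
      Finset.sum_ite_eq, Finset.mem_univ, if_true]
    congr 1
    exact Finset.sum_congr rfl fun m _ => by ring
lemma Tsym {n : ℕ} {τ : Type} (idx : Fin n → τ) (p : MvPolynomial (Fin n) ℚ) (m m' : Fin n)
    (h : idx m' = idx m) (hp : rename (Equiv.swap m m') p = p) :
    aeval (fun x => (X (idx x) : MvPolynomial τ ℚ)) (pderiv m' p)
      = aeval (fun x => X (idx x)) (pderiv m p) := by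
  conv_lhs => rw [← hp]
  have key := pderiv_rename (Equiv.injective (Equiv.swap m m')) m p
  rw [Equiv.swap_apply_left] at key
  have hcomp : ((fun x => (X (idx x) : MvPolynomial τ ℚ)) ∘ ⇑(Equiv.swap m m'))
      = fun x => X (idx x) := by
    funext x
    simp only [Function.comp_apply]
    congr 1
    by_cases h1 : x = m
    · subst h1; rw [Equiv.swap_apply_left, h]
    · by_cases h2 : x = m'
      · subst h2; rw [Equiv.swap_apply_right, h]
      · rw [Equiv.swap_apply_of_ne_of_ne h1 h2]
  rw [key, aeval_rename, hcomp]

lemma Iset_card {n k : ℕ} (nn t : Fin k → ℕ) (i : Fin k) (j : ℕ) (hj : j < t i)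
    (hsum : ∑ i, t i * nn i = n) :
    (Iset n nn t i j).card = nn i := by
  have h1 : j * nn i + nn i ≤ t i * nn i := by
    calc j * nn i + nn i = (j + 1) * nn i := by ring
    _ ≤ t i * nn i := Nat.mul_le_mul_right _ hj
  have h2 : ∑ r ∈ insert i (Finset.Iio i), t r * nn r ≤ n := by
    rw [← hsum]; exact Finset.sum_le_sum_of_subset (Finset.subset_univ _)
  rw [Finset.sum_insert (by simp)] at h2
  have hle : sigmaShift nn t i j + nn i ≤ n := by
    unfold sigmaShift; omega
  have : Iset n nn t i j = (Finset.Ico (sigmaShift nn t i j) (sigmaShift nn t i j + nn i)).attachFin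
      (fun m hm => lt_of_lt_of_le (Finset.mem_Ico.1 hm).2 hle) := by
    ext m
    simp [Iset, Finset.mem_attachFin, Finset.mem_Ico]
  rw [this, Finset.card_attachFin, Nat.card_Ico]
  omega
theorem Tlambda_jacobian_factorization
    (n k s : ℕ) (nn t : Fin k → ℕ)
    (hmono : StrictMono nn) (hnpos : ∀ i, 0 < nn i) (htpos : ∀ i, 0 < t i)
    (hsum : ∑ i, t i * nn i = n)
    (idx : Fin n → (i : Fin k) × Fin (t i))
    (hidx : ∀ (m : Fin n) (i : Fin k) (j : Fin (t i)),
      idx m = ⟨i, j⟩ ↔ m ∈ Iset n nn t i (j : ℕ))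
    (f : Fin s → MvPolynomial (Fin n) ℚ)
    (hf : ∀ a, ∀ σ : Equiv.Perm (Fin n), rename σ (f a) = f a) :
    (Matrix.of fun (a : Fin s) (m : Fin n) =>
        aeval (fun m' : Fin n => (X (idx m') : MvPolynomial ((i : Fin k) × Fin (t i)) ℚ))
          (pderiv m (f a)))
      = (Matrix.of fun (a : Fin s) (v : (i : Fin k) × Fin (t i)) =>
          pderiv v (aeval (fun m' : Fin n => X (idx m')) (f a))) *
        (Matrix.of fun (v : (i : Fin k) × Fin (t i)) (m : Fin n) =>
          if m ∈ Iset n nn t v.1 (v.2 : ℕ)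
          then (C ((nn v.1 : ℚ)⁻¹) : MvPolynomial ((i : Fin k) × Fin (t i)) ℚ)
          else 0) := by
  classical
  refine Matrix.ext fun a m => ?_
  erw [Matrix.mul_apply]
  simp only [Matrix.of_apply]
  set T : MvPolynomial (Fin n) ℚ →ₐ[ℚ] MvPolynomial ((i : Fin k) × Fin (t i)) ℚ :=
    aeval (fun m' : Fin n => (X (idx m') : MvPolynomial ((i : Fin k) × Fin (t i)) ℚ)) with hT
  have hmem : ∀ v : (i : Fin k) × Fin (t i),
      (m ∈ Iset n nn t v.1 (v.2 : ℕ)) ↔ idx m = v := by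
    intro v
    rw [← hidx m v.1 v.2]
  -- collapse the sum on the RHS
  have hsum1 : (∑ v : (i : Fin k) × Fin (t i),
        pderiv v (T (f a)) *
          if m ∈ Iset n nn t v.1 (v.2 : ℕ)
          then (C ((nn v.1 : ℚ)⁻¹) : MvPolynomial ((i : Fin k) × Fin (t i)) ℚ) else 0)
      = pderiv (idx m) (T (f a)) * C ((nn (idx m).1 : ℚ)⁻¹) := by
    rw [Finset.sum_eq_single (idx m)]
    · rw [if_pos ((hmem (idx m)).2 rfl)]
    · intro v _ hv
      rw [if_neg (fun hm' => hv ((hmem v).1 hm').symm), mul_zero]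
    · intro h; exact absurd (Finset.mem_univ _) h
  rw [hsum1]
  -- chain rule
  have hchain := chainRule (fun m' : Fin n =>
    (X (idx m') : MvPolynomial ((i : Fin k) × Fin (t i)) ℚ)) (f a) (idx m)
  have hX : ∀ m' : Fin n,
      pderiv (idx m) (X (idx m') : MvPolynomial ((i : Fin k) × Fin (t i)) ℚ)
        = if idx m' = idx m then 1 else 0 := by
    intro m'
    rw [pderiv_X, Pi.single_apply]
  have hfib : ∀ m' : Fin n, idx m' = idx m → T (pderiv m' (f a)) = T (pderiv m (f a)) := by
    intro m' h
    exact Tsym idx (f a) m m' h (hf a (Equiv.swap m m'))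
  have hcard : (Finset.univ.filter fun m' : Fin n => idx m' = idx m).card = nn (idx m).1 := by
    have : (Finset.univ.filter fun m' : Fin n => idx m' = idx m)
        = Iset n nn t (idx m).1 ((idx m).2 : ℕ) := by
      ext m'
      simp only [Finset.mem_filter, Finset.mem_univ, true_and]
      rw [← hidx m' (idx m).1 (idx m).2]
    rw [this, Iset_card nn t _ _ (idx m).2.isLt hsum]
  have hder : pderiv (idx m) (T (f a)) = (nn (idx m).1) • T (pderiv m (f a)) := by
    rw [hT, hchain]
    simp only [hX, mul_ite, mul_one, mul_zero]
    rw [← Finset.sum_filter]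
    rw [Finset.sum_congr rfl (fun m' hm' => hfib m' (Finset.mem_filter.1 hm').2),
      Finset.sum_const, hcard]
  rw [hder, nsmul_eq_mul]
  have hC : ((nn (idx m).1 : ℕ) : MvPolynomial ((i : Fin k) × Fin (t i)) ℚ)
      = C ((nn (idx m).1 : ℚ)) := by
    rw [← map_natCast (C : ℚ →+* MvPolynomial ((i : Fin k) × Fin (t i)) ℚ)]
  rw [hC, mul_comm (C ((nn (idx m).1 : ℚ))), mul_assoc, ← C_mul,
    mul_inv_cancel₀ (by exact_mod_cast (hnpos (idx m).1).ne' : ((nn (idx m).1 : ℚ)) ≠ 0),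
    C_1, mul_one]
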